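/- arXiv:2103.02667 — 2 statements merged into one kernel-verified Lean document; each statement's English description precedes it below -/
import Mathlib

section
/- For each $e$ in a finite index set $\mathcal{E}$, let $R^e: \mathbb{R}^d \to \mathbb{R}$ be convex and differentiable. A vector $v \in \mathbb{R}^d$ can be written as $v = \Phi^\top w$ for some matrix $\Phi \in \mathbb{R}^{p \times d}$ and a vector $w \in \mathbb{R}^p$ that simultaneously minimizes $w' \mapsto R^e(\Phi^\top w')$ for every $e \in \mathcal{E}$, if and only if $v^\top \nabla R^e(v) = 0$ for all $e \in \mathcal{E}$. Moreover, the matrices $\Phi$ admitting such a decomposition are exactly those whose nullspace is orthogonal to $v$ and contains all the gradients $\nabla R^e(v)$. -/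
open Matrix

/-- The continuous linear map `x ↦ g ⬝ᵥ x`, used to express that `g` is the gradient. -/
noncomputable def dotCLM (d : ℕ) (g : Fin d → ℝ) : (Fin d → ℝ) →L[ℝ] ℝ :=
  LinearMap.toContinuousLinearMap
    { toFun := fun x => g ⬝ᵥ x
      map_add' := by intro x y; simp [dotProduct_add]
      map_smul' := by intro c x; simp [dotProduct_smul] }

lemma dotCLM_apply (d : ℕ) (g x : Fin d → ℝ) : dotCLM d g x = g ⬝ᵥ x := rfl

/-- gradient inequality for convex differentiable functions -/
lemma grad_ineq {d : ℕ} {f : (Fin d → ℝ) → ℝ} {g v : Fin d → ℝ}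
    (hconv : ConvexOn ℝ Set.univ f) (hd : HasFDerivAt f (dotCLM d g) v)
    (y : Fin d → ℝ) : f v + g ⬝ᵥ (y - v) ≤ f y := by
  set c := y - v with hc
  have hline : ∀ t : ℝ, (AffineMap.lineMap v y : ℝ →ᵃ[ℝ] (Fin d → ℝ)) t = v + t • c := by
    intro t; simp [AffineMap.lineMap_apply, hc]; abel
  have hφconv : ConvexOn ℝ Set.univ (f ∘ (AffineMap.lineMap v y : ℝ →ᵃ[ℝ] (Fin d → ℝ))) := by
    simpa using hconv.comp_affineMap (AffineMap.lineMap v y)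
  have hα : HasDerivAt (fun t : ℝ => v + t • c) c 0 := by
    simpa using ((hasDerivAt_id (0:ℝ)).smul_const c).const_add v
  have hφd : HasDerivAt (f ∘ (AffineMap.lineMap v y : ℝ →ᵃ[ℝ] (Fin d → ℝ))) (g ⬝ᵥ c) 0 := by
    have h0 : v + (0:ℝ) • c = v := by simp
    have h1 := (h0 ▸ hd).comp_hasDerivAt 0 hα
    have heq : (f ∘ fun t : ℝ => v + t • c) = f ∘ (AffineMap.lineMap v y : ℝ →ᵃ[ℝ] (Fin d → ℝ)) := by
      funext t; simp [Function.comp, hline t]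
    rw [← heq]
    simpa [dotCLM_apply] using h1
  have := hφconv.le_slope_of_hasDerivAt (Set.mem_univ 0) (Set.mem_univ 1) one_pos hφd
  have hvc : v + c = y := by simp [hc]
  simp [slope_def_field, hline, hvc] at this
  linarith

lemma exists_w_of_orth {d p : ℕ} (Φ : Matrix (Fin p) (Fin d) ℝ) (v : Fin d → ℝ)
    (h : ∀ x : Fin d → ℝ, Φ.mulVec x = 0 → x ⬝ᵥ v = 0) :
    ∃ w : Fin p → ℝ, Φ.transpose.mulVec w = v := by
  classical
  let T : (Fin p → ℝ) →ₗ[ℝ] EuclideanSpace ℝ (Fin d) :=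
    (WithLp.linearEquiv 2 ℝ (Fin d → ℝ)).symm.toLinearMap ∘ₗ Φ.transpose.mulVecLin
  let K : Submodule ℝ (EuclideanSpace ℝ (Fin d)) := LinearMap.range T
  have hinner : ∀ x y : EuclideanSpace ℝ (Fin d),
      (inner ℝ x y : ℝ) = (x : Fin d → ℝ) ⬝ᵥ (y : Fin d → ℝ) := by
    intro x y
    simp [PiLp.inner_apply, RCLike.inner_apply, dotProduct, mul_comm]
  have hv : ((WithLp.linearEquiv 2 ℝ (Fin d → ℝ)).symm v) ∈ Kᗮᗮ := by
    rw [Submodule.mem_orthogonal]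
    intro u hu
    have hΦu : Φ.mulVec ((WithLp.linearEquiv 2 ℝ (Fin d → ℝ)) u) = 0 := by
      funext i
      have := hu (T (Pi.single i 1)) ⟨Pi.single i 1, rfl⟩
      rw [hinner] at this
      simp only [T, LinearMap.comp_apply, Matrix.mulVecLin_apply] at this
      rw [Matrix.mulVec_transpose] at this
      have h2 : Pi.single i 1 ⬝ᵥ Φ.mulVec ((WithLp.linearEquiv 2 ℝ (Fin d → ℝ)) u) = 0 := by
        rw [Matrix.dotProduct_mulVec]
        exact this
      simpa [single_dotProduct] using h2
    have := h _ hΦu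
    rw [hinner]
    simpa using this
  have hK : Kᗮᗮ = K := Submodule.orthogonal_orthogonal K
  rw [hK] at hv
  obtain ⟨w, hw⟩ := hv
  exact ⟨w, congrArg (WithLp.linearEquiv 2 ℝ (Fin d → ℝ)) hw⟩

lemma part2 {d p : ℕ} {E : Type*} [Fintype E] (R : E → (Fin d → ℝ) → ℝ)
    (grad : E → (Fin d → ℝ) → (Fin d → ℝ))
    (hconv : ∀ e, ConvexOn ℝ Set.univ (R e))
    (hdiff : ∀ e x, HasFDerivAt (R e) (dotCLM d (grad e x)) x)
    (v : Fin d → ℝ) (Φ : Matrix (Fin p) (Fin d) ℝ) :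
    (∃ w : Fin p → ℝ,
        Φ.transpose.mulVec w = v ∧
        ∀ e, ∀ w' : Fin p → ℝ,
          R e (Φ.transpose.mulVec w) ≤ R e (Φ.transpose.mulVec w'))
      ↔ ((∀ x : Fin d → ℝ, Φ.mulVec x = 0 → x ⬝ᵥ v = 0) ∧
          ∀ e, Φ.mulVec (grad e v) = 0) := by
  constructor
  · rintro ⟨w, hw, hmin⟩
    constructor
    · intro x hx
      rw [← hw, Matrix.dotProduct_mulVec, Matrix.vecMul_transpose, hx, zero_dotProduct]
    · intro e
      set L : (Fin p → ℝ) →L[ℝ] (Fin d → ℝ) :=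
        LinearMap.toContinuousLinearMap (Φ.transpose.mulVecLin) with hL
      have hLapp : ∀ u, L u = Φ.transpose.mulVec u := fun u => rfl
      have hderiv : HasFDerivAt (fun w' => R e (Φ.transpose.mulVec w'))
          ((dotCLM d (grad e v)).comp L) w := by
        have h1 : HasFDerivAt (R e) (dotCLM d (grad e v)) (L w) := by
          rw [hLapp, hw]; exact hdiff e v
        exact h1.comp w L.hasFDerivAt
      have hlmin : IsLocalMin (fun w' => R e (Φ.transpose.mulVec w')) w :=
        Filter.Eventually.of_forall (fun w' => hmin e w')
      have hz := hlmin.hasFDerivAt_eq_zero hderiv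
      funext i
      have := congrArg (fun (T : (Fin p → ℝ) →L[ℝ] ℝ) => T (Pi.single i 1)) hz
      simp only [ContinuousLinearMap.comp_apply, ContinuousLinearMap.zero_apply] at this
      rw [hLapp, dotCLM_apply, Matrix.dotProduct_mulVec, Matrix.vecMul_transpose] at this
      simpa [dotProduct_single] using this
  · rintro ⟨hker, hgrad⟩
    obtain ⟨w, hw⟩ := exists_w_of_orth Φ v hker
    refine ⟨w, hw, fun e w' => ?_⟩
    set g := grad e v with hg
    have key : ∀ u : Fin p → ℝ, g ⬝ᵥ Φ.transpose.mulVec u = 0 := by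
      intro u
      rw [Matrix.dotProduct_mulVec, Matrix.vecMul_transpose, hgrad e, zero_dotProduct]
    have h1 := grad_ineq (hconv e) (hdiff e v) (Φ.transpose.mulVec w')
    have hgv : g ⬝ᵥ v = 0 := by rw [← hw]; exact key w
    have h2 : g ⬝ᵥ (Φ.transpose.mulVec w' - v) = 0 := by
      rw [dotProduct_sub, key w', hgv, sub_zero]
    rw [hw]
    linarith

/-- for convex differentiable risks `R^e : ℝ^d → ℝ`, a vector `v` can be
written as `v = Φᵀ w` with `w` simultaneously minimizing `w' ↦ R^e(Φᵀ w')` for all `e`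
iff `vᵀ ∇R^e(v) = 0` for all `e`; moreover the matrices `Φ` admitting such a decomposition
are exactly those whose nullspace is orthogonal to `v` and contains all `∇R^e(v)`. -/
theorem invariant_linear_predictor_characterization
    (d : ℕ) (E : Type*) [Fintype E]
    (R : E → (Fin d → ℝ) → ℝ)
    (grad : E → (Fin d → ℝ) → (Fin d → ℝ))
    (hconv : ∀ e, ConvexOn ℝ Set.univ (R e))
    (hdiff : ∀ e x, HasFDerivAt (R e) (dotCLM d (grad e x)) x)
    (v : Fin d → ℝ) :
    ((∃ p : ℕ, ∃ Φ : Matrix (Fin p) (Fin d) ℝ, ∃ w : Fin p → ℝ,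
        Φ.transpose.mulVec w = v ∧
        ∀ e, ∀ w' : Fin p → ℝ,
          R e (Φ.transpose.mulVec w) ≤ R e (Φ.transpose.mulVec w'))
      ↔ ∀ e, v ⬝ᵥ grad e v = 0)
    ∧
    (∀ (p : ℕ) (Φ : Matrix (Fin p) (Fin d) ℝ),
      (∃ w : Fin p → ℝ,
        Φ.transpose.mulVec w = v ∧
        ∀ e, ∀ w' : Fin p → ℝ,
          R e (Φ.transpose.mulVec w) ≤ R e (Φ.transpose.mulVec w'))
      ↔ ((∀ x : Fin d → ℝ, Φ.mulVec x = 0 → x ⬝ᵥ v = 0) ∧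
          ∀ e, Φ.mulVec (grad e v) = 0)) := by
  refine ⟨?_, fun p Φ => part2 R grad hconv hdiff v Φ⟩
  constructor
  · rintro ⟨p, Φ, hex⟩ e
    obtain ⟨hker, hgrad⟩ := (part2 R grad hconv hdiff v Φ).mp hex
    obtain ⟨w, hw, -⟩ := hex
    set g := grad e v with hg
    rw [dotProduct_comm, ← hw, Matrix.dotProduct_mulVec, Matrix.vecMul_transpose,
      hgrad e, zero_dotProduct]
  · intro h
    refine ⟨1, Matrix.of (fun _ => v), ?_⟩
    apply (part2 R grad hconv hdiff v _).mpr
    constructor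
    · intro x hx
      have := congrFun hx 0
      simp only [Matrix.mulVec, Matrix.of_apply, Pi.zero_apply] at this
      rw [dotProduct_comm]
      exact this
    · intro e
      funext i
      simp only [Matrix.mulVec, Matrix.of_apply, Pi.zero_apply]
      exact h e
end

section
/- Fix $v \in \mathbb{R}^d$ and arbitrary vectors $\Sigma^e_{X,\epsilon} \in \mathbb{R}^d$ for $e$ in a finite set $\mathcal{E}_{\mathrm{train}}$ of size $m$. Define $G: \mathbb{R}^d \setminus \{0\} \to \mathbb{R}^{m \times d}$ by $(G(x))_{e,\cdot} = \Sigma^e_{X,X} x - \Sigma^e_{X,\epsilon}$. Then for almost every tuple $(\Sigma^e_{X,X})_{e} \in (\mathcal{S}^{d \times d}_+)^m$ of symmetric positive semi-definite matrices (i.e., outside a set of measure zero), whenever $m > \frac{d}{r} + d - r$, the matrix $G(x)$ has rank greater than $d - r$ for every nonzero $x$; equivalently, the general-position condition of degree $r$ holds generically. -/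
set_option linter.unusedSectionVars false
set_option maxHeartbeats 1000000


open MeasureTheory Matrix

/-- A symmetric `d × d` matrix described by its upper-triangular coordinates. -/
def symOfCoords (d : ℕ) (a : {p : Fin d × Fin d // p.1 ≤ p.2} → ℝ) :
    Matrix (Fin d) (Fin d) ℝ :=
  Matrix.of fun i j =>
    if h : i ≤ j then a ⟨(i, j), h⟩ else a ⟨(j, i), le_of_not_ge h⟩

section Helpers

lemma exists_invertible_submatrix {r : ℕ} {κ : Type*} [Fintype κ] [DecidableEq κ]
    (M : Matrix (Fin r) κ ℝ) (h : LinearIndependent ℝ M) :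
    ∃ g : Fin r → κ, Function.Injective g ∧ IsUnit (M.submatrix id g).det := by
  classical
  have hrank : M.rank = r := by
    have := h.rank_matrix
    simpa [Matrix.rank, Fintype.card_fin] using h.rank_matrix
  have hspan : Submodule.span ℝ (Set.range Mᵀ) = ⊤ := by
    apply Submodule.eq_top_of_finrank_eq
    have := M.rank_eq_finrank_span_cols
    rw [hrank] at this
    simp [Module.finrank_pi]; exact this.symm
  -- basis contained in the set of columns
  let b := Module.Basis.ofSpan hspan.ge
  have hb : ∀ i, (b i : Fin r → ℝ) ∈ Set.range Mᵀ := by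
    intro i
    have : (b i : Fin r → ℝ) = (i : Fin r → ℝ) := Module.Basis.ofSpan_apply_self _ i
    rw [this]
    exact ((LinearIndepOn.extend_subset _ _) i.2)
  have : FiniteDimensional ℝ (Fin r → ℝ) := by infer_instance
  let e := b.indexEquiv (Pi.basisFun ℝ (Fin r))
  let b' : Module.Basis (Fin r) ℝ (Fin r → ℝ) := b.reindex e
  have hb' : ∀ j, ∃ c, Mᵀ c = b' j := by
    intro j
    obtain ⟨c, hc⟩ := hb (e.symm j)
    exact ⟨c, by simpa [b'] using hc⟩
  choose g hg using hb'
  refine ⟨g, ?_, ?_⟩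
  · intro j j' hjj'
    apply b'.injective
    rw [← hg j, ← hg j', hjj']
  · rw [← Matrix.isUnit_iff_isUnit_det]
    rw [← Matrix.mulVec_injective_iff_isUnit]
    have hker : ∀ v, (M.submatrix id g).mulVec v = 0 → v = 0 := by
      intro v hv
      have hsum : ∑ j, v j • b' j = 0 := by
        funext i
        have := congrFun hv i
        simp only [Matrix.mulVec, dotProduct, Matrix.submatrix_apply, id_eq] at this
        simp only [Finset.sum_apply, Pi.smul_apply, smul_eq_mul, Pi.zero_apply]
        rw [show (0:ℝ) = ∑ x : Fin r, M i (g x) * v x from by simpa using this.symm]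
        congr 1
        funext j
        rw [← hg j]
        simp [Matrix.transpose_apply, mul_comm]
      exact funext (Fintype.linearIndependent_iff.mp b'.linearIndependent v hsum)
    intro a c hac
    have h0 : (M.submatrix id g).mulVec (a - c) = 0 := by
      rw [Matrix.mulVec_sub, hac, sub_self]
    have := hker _ h0
    rwa [sub_eq_zero] at this

section Sym


variable {d : ℕ}

abbrev SymCoord (d : ℕ) := {p : Fin d × Fin d // p.1 ≤ p.2}

/-- The coordinate index corresponding to entry `(i,j)`. -/
def prc (i j : Fin d) : SymCoord d :=
  if h : i ≤ j then ⟨(i, j), h⟩ else ⟨(j, i), le_of_not_ge h⟩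

lemma symOfCoords_apply (a : SymCoord d → ℝ) (i j : Fin d) :
    symOfCoords d a i j = a (prc i j) := by
  simp only [symOfCoords, Matrix.of_apply, prc]
  split <;> rfl

lemma symOfCoords_symm (a : SymCoord d → ℝ) (i j : Fin d) :
    symOfCoords d a i j = symOfCoords d a j i := by
  rw [symOfCoords_apply, symOfCoords_apply]
  congr 1
  unfold prc
  rcases le_total i j with h | h
  · rcases eq_or_lt_of_le h with rfl | hlt
    · simp
    · rw [dif_pos h, dif_neg (not_le.mpr hlt)]
  · rcases eq_or_lt_of_le h with rfl | hlt
    · simp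
    · rw [dif_neg (not_le.mpr hlt), dif_pos h]

/-- coefficient of coordinate `c` in `w ⬝ (symOfCoords a *ᵥ x)`. -/
def Lrow (x w : Fin d → ℝ) (c : SymCoord d) : ℝ :=
  ∑ i, ∑ k, if prc i k = c then w i * x k else 0

lemma dot_sym_mulVec (a : SymCoord d → ℝ) (x w : Fin d → ℝ) :
    ∑ i, w i * ((symOfCoords d a).mulVec x) i = ∑ c, a c * Lrow x w c := by
  have key : ∀ i k, w i * (symOfCoords d a i k * x k)
      = ∑ c, a c * (if prc i k = c then w i * x k else 0) := by
    intro i k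
    have : ∀ c, a c * (if prc i k = c then w i * x k else 0)
        = if prc i k = c then a c * (w i * x k) else 0 := by
      intro c; split <;> simp
    rw [Finset.sum_congr rfl (fun c _ => this c)]
    rw [Finset.sum_ite_eq Finset.univ (prc i k) (fun c => a c * (w i * x k))]
    simp only [Finset.mem_univ, if_true, symOfCoords_apply]
    ring
  simp only [Matrix.mulVec, dotProduct, Finset.mul_sum]
  simp only [key, Lrow, Finset.mul_sum]
  rw [Finset.sum_congr rfl (fun i _ => Finset.sum_comm)]
  rw [Finset.sum_comm]

end Sym

section Chart
variable {d r' : ℕ}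

/-- Chart vectors for the Grassmannian: `wvec σ B j` equals the `σ∘inl j`-th standard basis
vector plus `B`-entries in the `σ∘inr` coordinates. -/
def wvec (σ : (Fin r' ⊕ Fin (d - r')) ≃ Fin d) (B : Fin r' → Fin (d - r') → ℝ)
    (j : Fin r') (i : Fin d) : ℝ :=
  Sum.elim (fun j' => if j' = j then (1:ℝ) else 0) (fun i' => B j i') (σ.symm i)

lemma wvec_inl (σ : (Fin r' ⊕ Fin (d - r')) ≃ Fin d) (B : Fin r' → Fin (d - r') → ℝ)
    (j j' : Fin r') : wvec σ B j (σ (Sum.inl j')) = if j' = j then 1 else 0 := by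
  simp [wvec]

lemma wvec_inr (σ : (Fin r' ⊕ Fin (d - r')) ≃ Fin d) (B : Fin r' → Fin (d - r') → ℝ)
    (j : Fin r') (i' : Fin (d - r')) : wvec σ B j (σ (Sum.inr i')) = B j i' := by
  simp [wvec]

lemma chart_surjective (σ : (Fin r' ⊕ Fin (d - r')) ≃ Fin d) (B : Fin r' → Fin (d - r') → ℝ)
    (x : Fin d → ℝ) (hx : x ≠ 0) (t : Fin r' → ℝ) :
    ∃ a : SymCoord d → ℝ, ∀ j, ∑ c, a c * Lrow x (wvec σ B j) c = t j := by
  classical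
  set s : ℝ := ∑ k, x k * x k with hs_def
  have hs : s ≠ 0 := by
    obtain ⟨i, hi⟩ := Function.ne_iff.mp hx
    have : 0 < s := Finset.sum_pos' (fun k _ => mul_self_nonneg _)
      ⟨i, Finset.mem_univ i, by simpa using mul_self_pos.mpr hi⟩
    exact this.ne'
  set y : Fin d → ℝ := fun i => Sum.elim (fun j' => t j') (fun _ => (0:ℝ)) (σ.symm i) with hy_def
  set yx : ℝ := ∑ k, y k * x k with hyx_def
  set A : Fin d → Fin d → ℝ := fun i k =>
    (y i * x k + x i * y k) / s - yx / (s * s) * (x i * x k) with hA_def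
  set a : SymCoord d → ℝ := fun c => A c.1.1 c.1.2 with ha_def
  have hsymm : ∀ i k : Fin d, A k i = A i k := by
    intro i k; simp only [hA_def]; ring
  have hAa : ∀ i k, symOfCoords d a i k = A i k := by
    intro i k
    rw [symOfCoords_apply]
    unfold prc
    split
    · rfl
    · exact hsymm i k
  have hmul : ∀ i, ((symOfCoords d a).mulVec x) i = y i := by
    intro i
    have hexp : ∀ k, A i k * x k = (y i / s) * (x k * x k) + (x i / s) * (y k * x k)
        - (yx / (s * s) * x i) * (x k * x k) := by
      intro k; simp only [hA_def]; ring
    have : ((symOfCoords d a).mulVec x) i = ∑ k, A i k * x k := by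
      simp only [Matrix.mulVec, dotProduct]
      exact Finset.sum_congr rfl fun k _ => by rw [hAa]
    rw [this, Finset.sum_congr rfl fun k _ => hexp k]
    rw [Finset.sum_sub_distrib, Finset.sum_add_distrib, ← Finset.mul_sum, ← Finset.mul_sum,
      ← Finset.mul_sum, ← hs_def, ← hyx_def]
    field_simp
    ring
  have hdoty : ∀ j, ∑ i, wvec σ B j i * y i = t j := by
    intro j
    rw [← Equiv.sum_comp σ (fun i => wvec σ B j i * y i)]
    rw [Fintype.sum_sum_type]
    have h1 : ∀ j', wvec σ B j (σ (Sum.inl j')) * y (σ (Sum.inl j'))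
        = (if j' = j then 1 else 0) * t j' := by
      intro j'; rw [wvec_inl]; simp [hy_def]
    have h2 : ∀ i', wvec σ B j (σ (Sum.inr i')) * y (σ (Sum.inr i')) = 0 := by
      intro i'; simp [hy_def]
    rw [Finset.sum_congr rfl fun j' _ => h1 j', Finset.sum_congr rfl fun i' _ => h2 i']
    simp [Finset.sum_ite_eq']
  refine ⟨a, fun j => ?_⟩
  rw [← dot_sym_mulVec]
  rw [Finset.sum_congr rfl fun i _ => by rw [hmul i]]
  exact hdoty j

end Chart

section Minor
variable {d r' : ℕ}

/-- For nonzero `x` and any chart data, there is a coordinate selection `T` on which the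
coefficient matrix of the linear system is invertible. -/
lemma exists_minor (σ : (Fin r' ⊕ Fin (d - r')) ≃ Fin d) (B : Fin r' → Fin (d - r') → ℝ)
    (x : Fin d → ℝ) (hx : x ≠ 0) :
    ∃ T : Fin r' → SymCoord d, Function.Injective T ∧
      IsUnit (Matrix.det (Matrix.of fun j j' : Fin r' => Lrow x (wvec σ B j) (T j'))) := by
  classical
  set Lm : Matrix (Fin r') (SymCoord d) ℝ := Matrix.of fun j c => Lrow x (wvec σ B j) c with hLm
  have hindep : LinearIndependent ℝ Lm := by
    refine Fintype.linearIndependent_iff.mpr ?_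
    intro v hv
    obtain ⟨a, ha⟩ := chart_surjective σ B x hx v
    have hvc : ∀ c, ∑ j, v j * Lm j c = 0 := by
      intro c
      have := congrFun hv c
      simpa using this
    have hzero : ∑ j, v j * v j = 0 := by
      have : ∑ j, v j * v j = ∑ j, v j * ∑ c, a c * Lm j c :=
        Finset.sum_congr rfl fun j _ => by rw [show ∑ c, a c * Lm j c = v j from ha j]
      rw [this]
      have : ∀ j, v j * ∑ c, a c * Lm j c = ∑ c, a c * (v j * Lm j c) := by
        intro j; rw [Finset.mul_sum]; exact Finset.sum_congr rfl fun c _ => by ring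
      rw [Finset.sum_congr rfl fun j _ => this j, Finset.sum_comm]
      rw [Finset.sum_congr rfl fun c _ => (Finset.mul_sum _ _ _).symm]
      rw [Finset.sum_congr rfl fun c _ => by rw [hvc c, mul_zero]]
      simp
    intro j
    have := (Finset.sum_eq_zero_iff_of_nonneg (fun k _ => mul_self_nonneg (v k))).mp hzero j
      (Finset.mem_univ j)
    exact mul_self_eq_zero.mp this
  obtain ⟨g, hg, hdet⟩ := exists_invertible_submatrix Lm hindep
  exact ⟨g, hg, by simpa [Matrix.submatrix, hLm] using hdet⟩

end Minor

section Annihilator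

open Module

lemma exists_annihilator {d r : ℕ} (hrd : r ≤ d) {ι : Type*} (v : ι → Fin d → ℝ)
    (hspan : Module.finrank ℝ (Submodule.span ℝ (Set.range v)) ≤ d - r) :
    ∃ u : Fin r → (Fin d → ℝ), LinearIndependent ℝ u ∧
      ∀ j e, ∑ i, u j i * v e i = 0 := by
  classical
  set eqv : (Fin d → ℝ) ≃ₗ[ℝ] EuclideanSpace ℝ (Fin d) :=
    (WithLp.linearEquiv 2 ℝ (Fin d → ℝ)).symm with heqv
  set U : Submodule ℝ (EuclideanSpace ℝ (Fin d)) :=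
    (Submodule.span ℝ (Set.range v)).map (eqv : (Fin d → ℝ) →ₗ[ℝ] EuclideanSpace ℝ (Fin d)) with hU
  have hUrank : Module.finrank ℝ U ≤ d - r := by
    exact le_trans (le_of_eq (LinearEquiv.finrank_map_eq eqv _)) hspan
  have hdim : Module.finrank ℝ U + Module.finrank ℝ Uᗮ = d := by
    rw [Submodule.finrank_add_finrank_orthogonal]
    simp [finrank_euclideanSpace]
  have hKr : r ≤ Module.finrank ℝ Uᗮ := by omega
  set bK := Module.finBasis ℝ Uᗮ with hbK
  set u : Fin r → (Fin d → ℝ) := fun j =>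
    eqv.symm ((bK (Fin.castLE hKr j) : EuclideanSpace ℝ (Fin d))) with hu
  refine ⟨u, ?_, ?_⟩
  · have h1 : LinearIndependent ℝ (fun j : Fin r => bK (Fin.castLE hKr j)) :=
      bK.linearIndependent.comp _ (Fin.castLE_injective hKr)
    have h2 : LinearIndependent ℝ
        (fun j : Fin r => (bK (Fin.castLE hKr j) : EuclideanSpace ℝ (Fin d))) :=
      h1.map' Uᗮ.subtype (Submodule.ker_subtype _)
    exact h2.map' eqv.symm.toLinearMap eqv.symm.ker
  · intro j e
    have hve : eqv (v e) ∈ U := by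
      rw [hU]
      exact Submodule.mem_map_of_mem (Submodule.subset_span (Set.mem_range_self e))
    have horth : inner (𝕜 := ℝ) (eqv (v e)) ((bK (Fin.castLE hKr j)) : EuclideanSpace ℝ (Fin d)) = 0 := by
      exact (Submodule.mem_orthogonal U _).mp ((bK (Fin.castLE hKr j)).2) _ hve
    rw [PiLp.inner_apply] at horth
    simp only [RCLike.inner_apply, conj_trivial] at horth
    rw [← horth]
    apply Finset.sum_congr rfl
    intro i _
    congr 1

lemma exists_chart_annihilator {d r : ℕ} (hrd : r ≤ d) {ι : Type*} (v : ι → Fin d → ℝ)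
    (hspan : Module.finrank ℝ (Submodule.span ℝ (Set.range v)) ≤ d - r) :
    ∃ (σ : (Fin r ⊕ Fin (d - r)) ≃ Fin d) (B : Fin r → Fin (d - r) → ℝ),
      ∀ j e, ∑ i, wvec σ B j i * v e i = 0 := by
  classical
  obtain ⟨u, hind, hann⟩ := exists_annihilator hrd v hspan
  set M : Matrix (Fin r) (Fin d) ℝ := Matrix.of u with hM
  have hindM : LinearIndependent ℝ M := hind
  obtain ⟨g, hginj, hdet⟩ := exists_invertible_submatrix M hindM
  set Q : Matrix (Fin r) (Fin r) ℝ := M.submatrix id g with hQ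
  set P : Matrix (Fin r) (Fin r) ℝ := Q⁻¹ with hP
  have hPQ : P * Q = 1 := Matrix.nonsing_inv_mul Q hdet
  set w : Fin r → Fin d → ℝ := fun j i => ∑ k, P j k * u k i with hwdef
  have hwg : ∀ j j', w j (g j') = if j = j' then 1 else 0 := by
    intro j j'
    have h1 : w j (g j') = (P * Q) j j' := by
      rw [Matrix.mul_apply]
      rfl
    rw [h1, hPQ, Matrix.one_apply]
  have hann' : ∀ j e, ∑ i, w j i * v e i = 0 := by
    intro j e
    have h1 : ∀ i, w j i * v e i = ∑ k, P j k * (u k i * v e i) := by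
      intro i
      rw [hwdef, Finset.sum_mul]
      exact Finset.sum_congr rfl fun k _ => by ring
    rw [Finset.sum_congr rfl fun i _ => h1 i, Finset.sum_comm]
    rw [Finset.sum_congr rfl fun k _ => (Finset.mul_sum _ _ _).symm]
    rw [Finset.sum_congr rfl fun k _ => by rw [hann k e, mul_zero]]
    simp
  have hcard : Fintype.card ↥(Set.range g)ᶜ = d - r := by
    rw [Fintype.card_compl_set]
    simp [Set.card_range_of_injective hginj]
  let e2 : Fin (d - r) ≃ ↥(Set.range g)ᶜ := Fintype.equivOfCardEq (by simp [hcard])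
  let σ : (Fin r ⊕ Fin (d - r)) ≃ Fin d :=
    (Equiv.sumCongr (Equiv.ofInjective g hginj) e2).trans (Equiv.Set.sumCompl (Set.range g))
  have hσl : ∀ j, σ (Sum.inl j) = g j := fun j => by
    simp [σ, Equiv.Set.sumCompl]; rfl
  set B : Fin r → Fin (d - r) → ℝ := fun j i' => w j (σ (Sum.inr i')) with hB
  have hw : ∀ j p, wvec σ B j (σ p) = w j (σ p) := by
    intro j p
    cases p with
    | inl j' =>
        rw [wvec_inl, hσl, hwg]
        simp [eq_comm]
    | inr i' =>
        rw [wvec_inr]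
  have hw' : ∀ j i, wvec σ B j i = w j i := by
    intro j i
    have := hw j (σ.symm i)
    rwa [σ.apply_symm_apply] at this
  refine ⟨σ, B, fun j e => ?_⟩
  rw [Finset.sum_congr rfl fun i _ => by rw [hw' j i]]
  exact hann' j e

end Annihilator

section Theta

variable {d r : ℕ} {E : Type*} [Fintype E] [DecidableEq E]

variable (Sige : E → Fin d → ℝ) (σ : (Fin r ⊕ Fin (d - r)) ≃ Fin d)
  (T : Fin r → SymCoord d) (J : (Fin d ⊕ Fin r × Fin (d - r)) → E × Fin r)

def xread (v : E → SymCoord d → ℝ) : Fin d → ℝ :=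
  fun i => v (J (Sum.inl i)).1 (T (J (Sum.inl i)).2)

def Bread (v : E → SymCoord d → ℝ) : Fin r → Fin (d - r) → ℝ :=
  fun j i' => v (J (Sum.inr (j, i'))).1 (T (J (Sum.inr (j, i'))).2)

def wv (v : E → SymCoord d → ℝ) : Fin r → Fin d → ℝ :=
  fun j => wvec σ (Bread T J v) j

def Nmat (v : E → SymCoord d → ℝ) : Matrix (Fin r) (Fin r) ℝ :=
  Matrix.of fun j j' => Lrow (xread T J v) (wv σ T J v j) (T j')

def rhsv (v : E → SymCoord d → ℝ) (e : E) : Fin r → ℝ := fun j =>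
  (∑ i, wv σ T J v j i * Sige e i) -
    ∑ c, if ∃ j', T j' = c then 0 else v e c * Lrow (xread T J v) (wv σ T J v j) c

noncomputable def solv (v : E → SymCoord d → ℝ) (e : E) : Fin r → ℝ :=
  ((Nmat σ T J v).det)⁻¹ • ((Nmat σ T J v).adjugate.mulVec (rhsv Sige σ T J v e))

noncomputable def Theta (v : E → SymCoord d → ℝ) : E → SymCoord d → ℝ := fun e c =>
  if h : ∃ j', T j' = c then solv Sige σ T J v e h.choose else v e c

def Omega : Set (E → SymCoord d → ℝ) := {v | IsUnit (Nmat σ T J v).det}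

/-- splitting a sum over coordinates along the range of the injective selection `T`. -/
lemma sum_split (hT : Function.Injective T) (f : SymCoord d → ℝ) :
    ∑ c, f c = (∑ j', f (T j')) + ∑ c, if ∃ j', T j' = c then 0 else f c := by
  classical
  have h1 : ∀ c, f c = (if ∃ j', T j' = c then f c else 0)
      + (if ∃ j', T j' = c then 0 else f c) := by
    intro c; split <;> simp
  rw [Finset.sum_congr rfl fun c _ => h1 c, Finset.sum_add_distrib]
  congr 1
  rw [Finset.sum_ite, Finset.sum_const_zero, add_zero]
  rw [show Finset.filter (fun c => ∃ j', T j' = c) Finset.univ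
      = Finset.image T Finset.univ by
    ext c; simp [eq_comm]]
  rw [Finset.sum_image (fun a _ b _ h => hT h)]

lemma theta_covers (hT : Function.Injective T) (hJ : Function.Injective J)
    (A : E → SymCoord d → ℝ) (x : Fin d → ℝ)
    (B : Fin r → Fin (d - r) → ℝ)
    (hann : ∀ j e, ∑ i, wvec σ B j i * ((symOfCoords d (A e)).mulVec x - Sige e) i = 0)
    (hdet : IsUnit (Matrix.det (Matrix.of fun j j' : Fin r => Lrow x (wvec σ B j) (T j')))) :
    A ∈ Theta Sige σ T J '' (Omega σ T J) := by
  classical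
  set store : (Fin d ⊕ Fin r × Fin (d - r)) → ℝ := Sum.elim x (fun q => B q.1 q.2) with hstore
  set vstar : E → SymCoord d → ℝ := fun e c =>
    if h : ∃ p, (J p).1 = e ∧ T (J p).2 = c then store h.choose else A e c with hvstar
  have hkey : ∀ p, vstar (J p).1 (T (J p).2) = store p := by
    intro p
    have hex : ∃ q, (J q).1 = (J p).1 ∧ T (J q).2 = T (J p).2 := ⟨p, rfl, rfl⟩
    rw [hvstar]
    simp only [dif_pos hex]
    congr 1
    have hc := hex.choose_spec
    have h2 : (J hex.choose).2 = (J p).2 := hT hc.2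
    have : J hex.choose = J p := Prod.ext hc.1 h2
    exact hJ this
  have hxread : xread T J vstar = x := by
    funext i
    have := hkey (Sum.inl i)
    simpa [xread, hstore] using this
  have hBread : Bread T J vstar = B := by
    funext j i'
    have := hkey (Sum.inr (j, i'))
    simpa [Bread, hstore] using this
  have hout : ∀ e c, (¬ ∃ j', T j' = c) → vstar e c = A e c := by
    intro e c hc
    rw [hvstar]
    apply dif_neg
    rintro ⟨p, _, hp2⟩
    exact hc ⟨(J p).2, hp2⟩
  have hNmat : Nmat σ T J vstar
      = Matrix.of fun j j' : Fin r => Lrow x (wvec σ B j) (T j') := by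
    unfold Nmat wv
    rw [hxread, hBread]
  have hmem : vstar ∈ Omega σ T J := by
    simp only [Omega, Set.mem_setOf_eq, hNmat]
    exact hdet
  refine ⟨vstar, hmem, ?_⟩
  -- the linear equations satisfied by A
  have heq : ∀ e, (Nmat σ T J vstar).mulVec (fun j' => A e (T j')) = rhsv Sige σ T J vstar e := by
    intro e
    funext j
    have h0 := hann j e
    have hsplit : ∑ i, wvec σ B j i * ((symOfCoords d (A e)).mulVec x) i
        - ∑ i, wvec σ B j i * Sige e i = 0 := by
      rw [← Finset.sum_sub_distrib]
      rw [← h0]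
      exact Finset.sum_congr rfl fun i _ => by simp [Pi.sub_apply]; ring
    have hmain : ∑ c, A e c * Lrow x (wvec σ B j) c = ∑ i, wvec σ B j i * Sige e i := by
      rw [← dot_sym_mulVec]
      linarith [hsplit]
    have hsp := sum_split T hT (fun c => A e c * Lrow x (wvec σ B j) c)
    rw [hmain] at hsp
    have hws : wv σ T J vstar = fun j => wvec σ B j := by
      funext j; unfold wv; rw [hBread]
    simp only [Matrix.mulVec, dotProduct, rhsv, hNmat, Matrix.of_apply]
    rw [hws, hxread]
    have : ∑ j', Lrow x (wvec σ B j) (T j') * A e (T j')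
        = ∑ j', A e (T j') * Lrow x (wvec σ B j) (T j') :=
      Finset.sum_congr rfl fun j' _ => mul_comm _ _
    rw [this]
    have hcout : ∀ c, (if ∃ j', T j' = c then 0 else vstar e c * Lrow x (wvec σ B j) c)
        = (if ∃ j', T j' = c then 0 else A e c * Lrow x (wvec σ B j) c) := by
      intro c
      split
      · rfl
      · rw [hout e c (by assumption)]
    rw [Finset.sum_congr rfl fun c _ => hcout c]
    linarith [hsp]
  have hsolv : ∀ e, solv Sige σ T J vstar e = fun j' => A e (T j') := by
    intro e
    unfold solv
    rw [← heq e]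
    rw [Matrix.mulVec_mulVec, Matrix.adjugate_mul]
    rw [Matrix.smul_mulVec, Matrix.one_mulVec]
    rw [smul_smul]
    have hdet' : (Nmat σ T J vstar).det ≠ 0 := by
      rw [hNmat]; exact hdet.ne_zero
    rw [inv_mul_cancel₀ hdet', one_smul]
  funext e c
  unfold Theta
  split
  · next h =>
      rw [hsolv e]
      simp only
      rw [h.choose_spec]
  · next h => exact hout e c h

lemma theta_eq_of_agree (hT : Function.Injective T) {e₀ : E} {j₀ : Fin r}
    (hJ0 : ∀ p, J p ≠ (e₀, j₀)) {v v' : E → SymCoord d → ℝ}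
    (hvv : ∀ e c, ¬(e = e₀ ∧ c = T j₀) → v e c = v' e c) :
    Theta Sige σ T J v = Theta Sige σ T J v' ∧ Nmat σ T J v = Nmat σ T J v' := by
  have hslot : ∀ p, v (J p).1 (T (J p).2) = v' (J p).1 (T (J p).2) := by
    intro p
    apply hvv
    rintro ⟨h1, h2⟩
    exact hJ0 p (Prod.ext h1 (hT h2))
  have hx : xread T J v = xread T J v' := by
    funext i; exact hslot (Sum.inl i)
  have hB : Bread T J v = Bread T J v' := by
    funext j i'; exact hslot (Sum.inr (j, i'))
  have hw : wv σ T J v = wv σ T J v' := by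
    unfold wv; rw [hB]
  have hN : Nmat σ T J v = Nmat σ T J v' := by
    unfold Nmat; rw [hx, hw]
  have hrest : ∀ e c, (¬ ∃ j', T j' = c) → v e c = v' e c := by
    intro e c hc
    apply hvv
    rintro ⟨_, h2⟩
    exact hc ⟨j₀, h2.symm⟩
  have hrhs : rhsv Sige σ T J v = rhsv Sige σ T J v' := by
    funext e j
    unfold rhsv
    rw [hx, hw]
    congr 1
    apply Finset.sum_congr rfl
    intro c _
    split
    · rfl
    · rw [hrest e c (by assumption)]
  have hsol : solv Sige σ T J v = solv Sige σ T J v' := by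
    unfold solv; rw [hN, hrhs]
  constructor
  · funext e c
    unfold Theta
    split
    · rw [hsol]
    · exact hrest e c (by assumption)
  · exact hN

/-- determinant of a matrix of differentiable functions is differentiable -/
lemma differentiable_det_comp {X : Type*} [NormedAddCommGroup X] [NormedSpace ℝ X]
    {n : Type*} [Fintype n] [DecidableEq n]
    {M : X → Matrix n n ℝ} (h : ∀ i j, Differentiable ℝ fun v => M v i j) :
    Differentiable ℝ fun v => (M v).det := by
  have hrw : (fun v => (M v).det)
      = fun v => ∑ τ : Equiv.Perm n, ((Equiv.Perm.sign τ : ℤ) : ℝ) * ∏ i, M v (τ i) i := by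
    funext v
    rw [Matrix.det_apply]
    exact Finset.sum_congr rfl fun τ _ => by
      rw [Units.smul_def, zsmul_eq_mul]
  rw [hrw]
  apply Differentiable.fun_sum
  intro τ _
  have hprod : ∀ s : Finset n, Differentiable ℝ (fun v => ∏ i ∈ s, M v (τ i) i) := by
    intro s
    induction s using Finset.induction_on with
    | empty => simpa using differentiable_const (1 : ℝ)
    | insert a s' hx ih =>
        have : (fun v => ∏ i ∈ insert a s', M v (τ i) i)
            = fun v => M v (τ a) a * ∏ i ∈ s', M v (τ i) i := by
          funext v; rw [Finset.prod_insert hx]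
        rw [this]
        exact (h (τ a) a).mul ih
  exact (hprod Finset.univ).const_mul _

lemma eval_differentiable (e : E) (c : SymCoord d) :
    Differentiable ℝ (fun v : E → SymCoord d → ℝ => v e c) :=
  ((ContinuousLinearMap.proj (R := ℝ) (φ := fun _ : SymCoord d => ℝ) c).comp
    (ContinuousLinearMap.proj (R := ℝ) (φ := fun _ : E => SymCoord d → ℝ) e)).differentiable

lemma xread_differentiable (i : Fin d) :
    Differentiable ℝ (fun v : E → SymCoord d → ℝ => xread T J v i) :=
  eval_differentiable _ _

lemma wv_differentiable (j : Fin r) (i : Fin d) :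
    Differentiable ℝ (fun v : E → SymCoord d → ℝ => wv σ T J v j i) := by
  unfold wv wvec
  cases h : σ.symm i with
  | inl j' => simp only [h, Sum.elim_inl]; exact differentiable_const _
  | inr i' => simp only [h, Sum.elim_inr]; exact eval_differentiable _ _

lemma lrow_differentiable (j : Fin r) (c : SymCoord d) :
    Differentiable ℝ (fun v : E → SymCoord d → ℝ =>
      Lrow (xread T J v) (wv σ T J v j) c) := by
  unfold Lrow
  apply Differentiable.fun_sum; intro i _
  apply Differentiable.fun_sum; intro k _
  split
  · exact (wv_differentiable σ T J j i).mul (xread_differentiable T J k)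
  · exact differentiable_const _

lemma det_nmat_differentiable :
    Differentiable ℝ (fun v : E → SymCoord d → ℝ => (Nmat σ T J v).det) :=
  differentiable_det_comp (fun j j' => lrow_differentiable σ T J j (T j'))

lemma adjugate_nmat_differentiable (j j' : Fin r) :
    Differentiable ℝ (fun v : E → SymCoord d → ℝ => (Nmat σ T J v).adjugate j j') := by
  have hrw : (fun v : E → SymCoord d → ℝ => (Nmat σ T J v).adjugate j j')
      = fun v => ((Nmat σ T J v).updateRow j' (Pi.single j 1)).det := by
    funext v; rw [Matrix.adjugate_apply]
  rw [hrw]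
  apply differentiable_det_comp
  intro a b
  by_cases hab : a = j'
  · subst hab
    simp only [Matrix.updateRow_self]
    exact differentiable_const _
  · simp only [Matrix.updateRow_ne hab]
    exact lrow_differentiable σ T J a (T b)

lemma rhsv_differentiable (e : E) (j : Fin r) :
    Differentiable ℝ (fun v : E → SymCoord d → ℝ => rhsv Sige σ T J v e j) := by
  unfold rhsv
  apply Differentiable.sub
  · apply Differentiable.fun_sum; intro i _
    exact (wv_differentiable σ T J j i).mul_const _
  · apply Differentiable.fun_sum; intro c _
    split
    · exact differentiable_const _
    · exact (eval_differentiable e c).mul (lrow_differentiable σ T J j c)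

lemma theta_differentiableAt {v : E → SymCoord d → ℝ} (hv : v ∈ Omega σ T J) :
    DifferentiableAt ℝ (Theta Sige σ T J) v := by
  have hdetne : (Nmat σ T J v).det ≠ 0 := hv.ne_zero
  rw [show Theta Sige σ T J = fun w e c => Theta Sige σ T J w e c from rfl]
  rw [differentiableAt_pi]
  intro e
  rw [differentiableAt_pi]
  intro c
  by_cases h : ∃ j', T j' = c
  · have hrw : (fun w => Theta Sige σ T J w e c) = fun w => solv Sige σ T J w e h.choose := by
      funext w; unfold Theta; rw [dif_pos h]
    rw [hrw]
    have hrw2 : (fun w => solv Sige σ T J w e h.choose)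
        = fun w => ((Nmat σ T J w).det)⁻¹
            * ∑ j', (Nmat σ T J w).adjugate h.choose j' * rhsv Sige σ T J w e j' := by
      funext w
      simp [solv, Matrix.mulVec, dotProduct]
    rw [hrw2]
    apply DifferentiableAt.mul
    · exact ((det_nmat_differentiable σ T J).differentiableAt).inv hdetne
    · apply DifferentiableAt.fun_sum; intro j' _
      exact ((adjugate_nmat_differentiable σ T J _ j').differentiableAt).mul
        ((rhsv_differentiable Sige σ T J e j').differentiableAt)
  · have hrw : (fun w => Theta Sige σ T J w e c) = fun w => w e c := by
      funext w; unfold Theta; rw [dif_neg h]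
    rw [hrw]
    exact (eval_differentiable e c).differentiableAt

end Theta

section Null
variable {d r : ℕ} {E : Type*} [Fintype E] [DecidableEq E]

lemma omega_image_null
    (Sige : E → Fin d → ℝ) (σ : (Fin r ⊕ Fin (d - r)) ≃ Fin d)
    (T : Fin r → SymCoord d) (J : (Fin d ⊕ Fin r × Fin (d - r)) → E × Fin r)
    (hT : Function.Injective T) {e₀ : E} {j₀ : Fin r} (hJ0 : ∀ p, J p ≠ (e₀, j₀)) :
    MeasureTheory.volume (Theta Sige σ T J '' Omega σ T J) = 0 := by
  classical
  apply MeasureTheory.addHaar_image_eq_zero_of_det_fderivWithin_eq_zero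
    (f' := fun v => fderiv ℝ (Theta Sige σ T J) v)
  · intro v hv
    exact ((theta_differentiableAt Sige σ T J hv).hasFDerivAt).hasFDerivWithinAt
  · intro v hv
    set u₀ : E → SymCoord d → ℝ := Pi.single e₀ (Pi.single (T j₀) (1:ℝ)) with hu₀
    have hu0val : u₀ e₀ (T j₀) = 1 := by simp [hu₀]
    have hu0 : ∀ e c, ¬(e = e₀ ∧ c = T j₀) → u₀ e c = 0 := by
      intro e c h
      by_cases he : e = e₀
      · subst he
        have hc : c ≠ T j₀ := fun hc => h ⟨rfl, hc⟩
        simp [hu₀, Pi.single_eq_same, Pi.single_eq_of_ne hc]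
      · simp [hu₀, Pi.single_eq_of_ne he]
    have hDu : fderiv ℝ (Theta Sige σ T J) v u₀ = 0 := by
      have hconst : ∀ t : ℝ, Theta Sige σ T J (v + t • u₀) = Theta Sige σ T J v := by
        intro t
        refine (theta_eq_of_agree Sige σ T J hT hJ0 ?_).1
        intro e c h
        have h0 : u₀ e c = 0 := hu0 e c h
        simp [h0]
      have h1 : HasDerivAt (fun t : ℝ => v + t • u₀) u₀ 0 := by
        simpa using ((hasDerivAt_id (0:ℝ)).smul_const u₀).const_add v
      have h2 : HasFDerivAt (Theta Sige σ T J) (fderiv ℝ (Theta Sige σ T J) v)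
          (v + (0:ℝ) • u₀) := by
        have := (theta_differentiableAt Sige σ T J hv).hasFDerivAt
        simpa using this
      have h3 : HasDerivAt (fun t : ℝ => Theta Sige σ T J (v + t • u₀))
          (fderiv ℝ (Theta Sige σ T J) v u₀) 0 := by
        exact h2.comp_hasDerivAt 0 h1
      have h4 : HasDerivAt (fun t : ℝ => Theta Sige σ T J (v + t • u₀)) 0 0 := by
        rw [funext hconst]
        exact hasDerivAt_const _ _
      exact h3.unique h4
    by_contra hdet0
    set D := fderiv ℝ (Theta Sige σ T J) v with hD
    have hdet0' : LinearMap.det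
        (D : (E → SymCoord d → ℝ) →ₗ[ℝ] (E → SymCoord d → ℝ)) ≠ 0 := hdet0
    have hinj := (LinearMap.equivOfDetNeZero _ hdet0').injective
    have hzero : u₀ = 0 := hinj (show
        (D : (E → SymCoord d → ℝ) →ₗ[ℝ] (E → SymCoord d → ℝ)) u₀
          = (D : (E → SymCoord d → ℝ) →ₗ[ℝ] (E → SymCoord d → ℝ)) 0 by
      rw [map_zero]
      exact hDu)
    have hbad := congrFun (congrFun hzero e₀) (T j₀)
    rw [hu0val] at hbad
    norm_num at hbad

end Null


end Helpers

/-- genericity of the linear general position condition. Fix arbitrary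
vectors `Σ^e_{X,ε}`. For almost every tuple of symmetric positive semi-definite matrices
`(Σ^e_{X,X})_e` (symmetric matrices being parametrized by their upper-triangular
coordinates, with Lebesgue measure on the coordinates), if the number `m` of
environments satisfies `m > d/r + d - r`, then for every nonzero `x` the vectors
`Σ^e_{X,X} x - Σ^e_{X,ε}` span a subspace of dimension greater than `d - r`; i.e. the
set of PSD tuples violating general position of degree `r` has measure zero. -/
theorem general_position_is_generic
    (d r : ℕ) (E : Type*) [Fintype E]
    (hrpos : 0 < r) (hrd : r ≤ d)
    (hm : (Fintype.card E : ℝ) > (d : ℝ) / r + (d : ℝ) - r)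
    (Sige : E → Fin d → ℝ) :
    volume {A : E → ({p : Fin d × Fin d // p.1 ≤ p.2} → ℝ) |
      (∀ e, (symOfCoords d (A e)).PosSemidef) ∧
      ∃ x : Fin d → ℝ, x ≠ 0 ∧
        Module.finrank ℝ (Submodule.span ℝ (Set.range fun e : E =>
          (symOfCoords d (A e)).mulVec x - Sige e)) ≤ d - r} = 0 := by
  classical
  -- cardinality bound
  have hcard : d + r * (d - r) < Fintype.card E * r := by
    have hr0 : (0:ℝ) < r := by exact_mod_cast hrpos
    have h2 : ((d:ℝ) / r + d - r) * r < Fintype.card E * r :=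
      mul_lt_mul_of_pos_right hm hr0
    have h3 : ((d:ℝ) / r + d - r) * r = d + r * ((d:ℝ) - r) := by
      field_simp; ring
    rw [h3] at h2
    have h4 : ((d + r * (d - r) : ℕ) : ℝ) < ((Fintype.card E * r : ℕ) : ℝ) := by
      push_cast [Nat.cast_sub hrd]
      convert h2 using 2
    exact_mod_cast h4
  -- choose the storage injection J once and for all
  have hcard' : Fintype.card (Fin d ⊕ Fin r × Fin (d - r)) ≤ Fintype.card (E × Fin r) := by
    simp only [Fintype.card_sum, Fintype.card_prod, Fintype.card_fin]
    omega
  obtain ⟨J⟩ := Function.Embedding.nonempty_of_card_le hcard'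
  have hJinj : Function.Injective J := J.injective
  -- spare slot
  have hnsurj : ¬ Function.Surjective (J : _ → E × Fin r) := by
    intro hs
    have := Fintype.card_le_of_surjective _ hs
    simp only [Fintype.card_sum, Fintype.card_prod, Fintype.card_fin] at this
    omega
  rw [Function.Surjective] at hnsurj
  push_neg at hnsurj
  obtain ⟨q₀, hq₀⟩ := hnsurj
  -- union bound
  apply MeasureTheory.measure_mono_null
    (t := ⋃ p : ((Fin r ⊕ Fin (d - r)) ≃ Fin d) × (Fin r ↪ SymCoord d),
      Theta Sige p.1 p.2 J '' Omega p.1 (p.2 : Fin r → SymCoord d) J)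
  · rintro A ⟨-, x, hx, hspan⟩
    obtain ⟨σ, B, hann⟩ := exists_chart_annihilator hrd
      (fun e : E => (symOfCoords d (A e)).mulVec x - Sige e) hspan
    obtain ⟨T, hTinj, hdet⟩ := exists_minor σ B x hx
    exact Set.mem_iUnion.mpr ⟨⟨σ, ⟨T, hTinj⟩⟩,
      theta_covers Sige σ T J hTinj hJinj A x B hann hdet⟩
  · apply MeasureTheory.measure_iUnion_null
    rintro ⟨σ, T⟩
    have hq : ∀ p, J p ≠ (q₀.1, q₀.2) := by
      intro p hp
      exact hq₀ p (by rw [hp])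
    exact omega_image_null Sige σ T J T.injective hq
end
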